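/- Let M be a d-CS-Rickart right R-module and S = End(M). Then: (1) for any idempotents e, f ∈ S there exists an idempotent g ∈ S such that eM + fM lies above gM; (2) if A lies above eM and B lies above fM for idempotents e, f ∈ S, then there exists an idempotent g ∈ S such that A + B lies above gM; (3) for any φ₁, …, φₙ ∈ S there exists an idempotent e ∈ S such that Σ_{i=1}^{n} im φᵢ lies above eM; (4) M is an SSP-d-CS module. -/

import Mathlib

namespace CSRickartPaper

section Defs

variable {R : Type*} [Ring R] {M : Type*} [AddCommGroup M] [Module R M]

/-- `N` is an essential submodule of `P` (inside the ambient module `M`):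
`N ≤ P` and every submodule of `P` intersecting `N` trivially is zero. -/
def EssentialIn (N P : Submodule R M) : Prop :=
  N ≤ P ∧ ∀ K : Submodule R M, K ≤ P → N ⊓ K = ⊥ → K = ⊥

/-- `N` is a small (superfluous) submodule of `P`. -/
def SmallIn (N P : Submodule R M) : Prop :=
  N ≤ P ∧ ∀ K : Submodule R M, K ≤ P → N ⊔ K = P → K = P

/-- `N` is a direct summand of `M`. -/
def IsDirectSummand (N : Submodule R M) : Prop :=
  ∃ K : Submodule R M, IsCompl N K

/-- `N` lies above the direct summand `D` of `M`: `M = D ⊕ K`, `D ≤ N` and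
`N ⊓ K` is small in `K`. -/
def LiesAbove (N D : Submodule R M) : Prop :=
  ∃ K : Submodule R M, IsCompl D K ∧ D ≤ N ∧ SmallIn (N ⊓ K) K

/-- `N` lies above a direct summand of `M`. -/
def LiesAboveSummand (N : Submodule R M) : Prop :=
  ∃ D : Submodule R M, LiesAbove N D

end Defs

section ModuleDefs

variable (R : Type*) [Ring R] (M : Type*) [AddCommGroup M] [Module R M]

/-- `M` is a CS-Rickart module: the kernel of every endomorphism is essential
in a direct summand `eM`, `e` an idempotent endomorphism. -/
def IsCSRickart : Prop :=
  ∀ φ : Module.End R M, ∃ e : Module.End R M, IsIdempotentElem e ∧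
    EssentialIn (LinearMap.ker φ) (LinearMap.range e)

/-- `M` is a d-CS-Rickart module: the image of every endomorphism lies above a
direct summand of `M`. -/
def IsDCSRickart : Prop :=
  ∀ φ : Module.End R M, LiesAboveSummand (LinearMap.range φ)

/-- `M` is a Rickart module. -/
def IsRickart : Prop :=
  ∀ φ : Module.End R M, ∃ e : Module.End R M, IsIdempotentElem e ∧
    LinearMap.ker φ = LinearMap.range e

/-- `M` is a dual Rickart module. -/
def IsDRickart : Prop :=
  ∀ φ : Module.End R M, ∃ e : Module.End R M, IsIdempotentElem e ∧
    LinearMap.range φ = LinearMap.range e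

/-- `M` is a CS (extending) module. -/
def IsCSModule : Prop :=
  ∀ N : Submodule R M, ∃ D : Submodule R M, IsDirectSummand D ∧ EssentialIn N D

/-- `M` is a lifting (d-CS) module. -/
def IsLifting : Prop :=
  ∀ N : Submodule R M, LiesAboveSummand N

/-- `M` is a singular module: the annihilator of every element is an essential
ideal of `R`. -/
def IsSingularModule : Prop :=
  ∀ m : M, EssentialIn (LinearMap.ker (LinearMap.toSpanSingleton R M m)) (⊤ : Submodule R R)

/-- `M` is uniform: every nonzero submodule is essential. -/
def IsUniformModule : Prop :=
  ∀ N : Submodule R M, N ≠ ⊥ → EssentialIn N (⊤ : Submodule R M)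

/-- `M` satisfies the C₂ condition: every submodule isomorphic to a direct
summand is itself a direct summand. -/
def IsC2 : Prop :=
  ∀ N D : Submodule R M, IsDirectSummand D → Nonempty (N ≃ₗ[R] D) → IsDirectSummand N

/-- `M` is K-nonsingular. -/
def IsKNonsingular : Prop :=
  ∀ φ : Module.End R M, ∀ N : Submodule R M, EssentialIn N (⊤ : Submodule R M) →
    N ≤ LinearMap.ker φ → φ = 0

/-- `M` is T-noncosingular. -/
def IsTNoncosingular : Prop :=
  ∀ φ : Module.End R M, φ ≠ 0 → ¬ SmallIn (LinearMap.range φ) (⊤ : Submodule R M)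

/-- `M` is an SIP-CS module. -/
def IsSIPCS : Prop :=
  ∀ A B : Submodule R M, IsDirectSummand A → IsDirectSummand B →
    ∃ D : Submodule R M, IsDirectSummand D ∧ EssentialIn (A ⊓ B) D

/-- `M` is an SSP-d-CS module. -/
def IsSSPdCS : Prop :=
  ∀ A B : Submodule R M, IsDirectSummand A → IsDirectSummand B →
    LiesAboveSummand (A ⊔ B)

end ModuleDefs

section RelDefs

variable (R : Type*) [Ring R] (M N : Type*) [AddCommGroup M] [Module R M]
  [AddCommGroup N] [Module R N]

/-- `M` is relatively CS-Rickart to `N`. -/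
def IsRelCSRickart : Prop :=
  ∀ φ : M →ₗ[R] N, ∃ e : Module.End R M, IsIdempotentElem e ∧
    EssentialIn (LinearMap.ker φ) (LinearMap.range e)

/-- `M` is relatively d-CS-Rickart to `N`. -/
def IsRelDCSRickart : Prop :=
  ∀ φ : M →ₗ[R] N, LiesAboveSummand (LinearMap.range φ)

/-- `N` is `M`-injective. -/
def IsRelInjective : Prop :=
  ∀ (A : Submodule R M) (f : A →ₗ[R] N), ∃ g : M →ₗ[R] N, ∀ a : A, g a = f a

end RelDefs

section RingDefs

variable (R : Type*) [Ring R]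

/-- The annihilator of an element `a` of `R`, as an ideal (kernel of `r ↦ r • a`). -/
def annElem (a : R) : Submodule R R :=
  LinearMap.ker (LinearMap.toSpanSingleton R R a)

/-- The annihilator of a subset `X` of `R`. -/
def annSet (X : Set R) : Submodule R R :=
  ⨅ x ∈ X, annElem R x

/-- The principal ideal generated by `e`, i.e. the image of `r ↦ r • e`. -/
def idealGen (e : R) : Submodule R R :=
  LinearMap.range (LinearMap.toSpanSingleton R R e)

/-- `R` is an ACS ring: the annihilator of every element is essential in a
direct summand `eR` of `R`. -/
def IsACSRing : Prop :=
  ∀ a : R, ∃ e : R, IsIdempotentElem e ∧ EssentialIn (annElem R a) (idealGen R e)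

/-- `R` is an essentially Baer ring. -/
def IsEssentiallyBaer : Prop :=
  ∀ X : Set R, X.Nonempty → ∃ e : R, IsIdempotentElem e ∧
    EssentialIn (annSet R X) (idealGen R e)

/-- The Jacobson radical of the ring `R`. -/
noncomputable def jacRad : Ideal R := Ideal.jacobson (⊥ : Ideal R)

/-- `R` is semiregular: `R/J(R)` is von Neumann regular and idempotents lift
modulo `J(R)` (stated elementwise). -/
def IsSemiregularRing : Prop :=
  (∀ a : R, ∃ b : R, a - a * b * a ∈ jacRad R) ∧
  (∀ a : R, a - a * a ∈ jacRad R →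
    ∃ e : R, IsIdempotentElem e ∧ e - a ∈ jacRad R)

/-- `J(R)` coincides with the singular ideal `Z(R)`. -/
def JacEqSingular : Prop :=
  ∀ a : R, a ∈ jacRad R ↔ EssentialIn (annElem R a) (⊤ : Submodule R R)

end RingDefs

section GenDefs

variable {R : Type*} [Ring R] {M : Type*} [AddCommGroup M] [Module R M]

/-- A submodule is `n`-generated if it is spanned by at most `n` elements. -/
def NGen (n : ℕ) (N : Submodule R M) : Prop :=
  ∃ f : Fin n → M, Submodule.span R (Set.range f) = N

end GenDefs

end CSRickartPaper


namespace CSRickartPaper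

section Helpers

variable {R : Type*} [Ring R] {M : Type*} [AddCommGroup M] [Module R M]

lemma smallIn_mono {S' S P : Submodule R M} (h : SmallIn S P) (hle : S' ≤ S) :
    SmallIn S' P := by
  refine ⟨le_trans hle h.1, fun K hK hsup => h.2 K hK ?_⟩
  exact le_antisymm (sup_le h.1 hK) (hsup ▸ sup_le_sup_right hle K)

lemma smallIn_top_of {S K : Submodule R M} (h : SmallIn S K) : SmallIn S ⊤ := by
  refine ⟨le_top, fun X _ hsup => ?_⟩
  have h1 : (S ⊔ X) ⊓ K = S ⊔ X ⊓ K := sup_inf_assoc_of_le X h.1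
  rw [hsup, top_inf_eq] at h1
  have h2 : X ⊓ K = K := h.2 _ inf_le_right h1.symm
  have hKX : K ≤ X := h2 ▸ inf_le_left
  refine eq_top_iff.2 ?_
  rw [← hsup]
  exact sup_le (h.1.trans hKX) le_rfl

lemma smallIn_of_isCompl {S P Q : Submodule R M} (h : SmallIn S ⊤) (hSP : S ≤ P)
    (hc : IsCompl P Q) : SmallIn S P := by
  refine ⟨hSP, fun X hX hsup => ?_⟩
  have h1 : S ⊔ (X ⊔ Q) = ⊤ := by
    rw [← sup_assoc, hsup]
    exact hc.sup_eq_top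
  have h2 : X ⊔ Q = ⊤ := h.2 _ le_top h1
  have h3 : (X ⊔ Q) ⊓ P = X ⊔ (Q ⊓ P) := sup_inf_assoc_of_le Q hX
  rw [h2, inf_comm Q P, hc.inf_eq_bot, sup_bot_eq] at h3
  simpa using h3.symm

lemma smallIn_sup {S T : Submodule R M} (hS : SmallIn S ⊤) (hT : SmallIn T ⊤) :
    SmallIn (S ⊔ T) ⊤ := by
  refine ⟨le_top, fun X hX hsup => ?_⟩
  rw [sup_assoc] at hsup
  exact hT.2 X hX (hS.2 _ le_top hsup)

lemma smallIn_map (φ : Module.End R M) {S : Submodule R M} (h : SmallIn S ⊤) :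
    SmallIn (S.map φ) ⊤ := by
  refine ⟨le_top, fun X _ hsup => ?_⟩
  have hcomap : S ⊔ X.comap φ = ⊤ := by
    rw [eq_top_iff]
    intro m _
    have hm : φ m ∈ S.map φ ⊔ X := hsup ▸ Submodule.mem_top
    obtain ⟨y, hy, x, hx, hyx⟩ := Submodule.mem_sup.1 hm
    obtain ⟨s, hs, rfl⟩ := hy
    refine Submodule.mem_sup.2 ⟨s, hs, m - s, ?_, by abel⟩
    simp only [Submodule.mem_comap, map_sub]
    rw [← hyx]; simpa using hx
  have hc : X.comap φ = ⊤ := h.2 _ le_top hcomap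
  have hmap : S.map φ ≤ X := by
    intro x hx
    obtain ⟨s, _, rfl⟩ := hx
    have : (s : M) ∈ X.comap φ := hc ▸ Submodule.mem_top
    exact this
  rw [← hsup]
  exact (sup_le hmap le_rfl).antisymm le_sup_right |>.symm

/-- The idempotent projection onto `D` along `K`. -/
noncomputable def projEnd (D K : Submodule R M) (h : IsCompl D K) : Module.End R M :=
  D.subtype ∘ₗ D.projectionOnto K h

lemma projEnd_apply_left {D K : Submodule R M} (h : IsCompl D K) {x : M} (hx : x ∈ D) :
    projEnd D K h x = x := by
  have := Submodule.projectionOnto_apply_left h ⟨x, hx⟩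
  simp [projEnd, this]

lemma projEnd_apply_right {D K : Submodule R M} (h : IsCompl D K) {x : M} (hx : x ∈ K) :
    projEnd D K h x = 0 := by
  have := Submodule.projectionOnto_apply_of_mem_right h hx
  simp [projEnd, this]

lemma projEnd_mem {D K : Submodule R M} (h : IsCompl D K) (x : M) :
    projEnd D K h x ∈ D := by
  simp [projEnd]

lemma projEnd_idem {D K : Submodule R M} (h : IsCompl D K) :
    IsIdempotentElem (projEnd D K h) := by
  refine LinearMap.ext fun x => ?_
  rw [Module.End.mul_apply]
  exact projEnd_apply_left h (projEnd_mem h x)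

lemma projEnd_range {D K : Submodule R M} (h : IsCompl D K) :
    LinearMap.range (projEnd D K h) = D := by
  apply le_antisymm
  · rintro _ ⟨x, rfl⟩; exact projEnd_mem h x
  · intro d hd
    exact ⟨d, projEnd_apply_left h hd⟩

lemma liesAbove_exists_small {N D : Submodule R M} (h : LiesAbove N D) :
    ∃ S : Submodule R M, SmallIn S ⊤ ∧ N = D ⊔ S := by
  obtain ⟨K, hc, hDN, hsm⟩ := h
  refine ⟨N ⊓ K, smallIn_top_of hsm, ?_⟩
  have h1 : (D ⊔ K) ⊓ N = D ⊔ K ⊓ N := sup_inf_assoc_of_le K hDN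
  rw [hc.sup_eq_top, top_inf_eq, inf_comm K N] at h1
  exact h1

lemma liesAbove_of_small {N D K S : Submodule R M} (hc : IsCompl D K) (hDN : D ≤ N)
    (hS : SmallIn S ⊤) (hN : N = D ⊔ S) : LiesAbove N D := by
  refine ⟨K, hc, hDN, ?_⟩
  have hπ : N ⊓ K ≤ S.map (projEnd K D hc.symm) := by
    rintro x ⟨hxN, hxK⟩
    rw [hN] at hxN
    obtain ⟨d, hd, s, hs, rfl⟩ := Submodule.mem_sup.1 hxN
    refine ⟨s, hs, ?_⟩
    have h1 : projEnd K D hc.symm (d + s) = projEnd K D hc.symm s := by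
      rw [map_add, projEnd_apply_right hc.symm hd, zero_add]
    rw [← h1, projEnd_apply_left hc.symm hxK]
  have hsmall : SmallIn (N ⊓ K) ⊤ :=
    smallIn_mono (smallIn_map (projEnd K D hc.symm) hS) hπ
  exact smallIn_of_isCompl hsmall inf_le_right hc.symm

lemma isCompl_range_idem {e : Module.End R M} (he : IsIdempotentElem e) :
    IsCompl (LinearMap.range e) (LinearMap.range (1 - e : Module.End R M)) := by
  have happ : ∀ x : M, e (e x) = e x := fun x => congrFun (congrArg DFunLike.coe he) x
  constructor
  · rw [disjoint_iff]
    rw [eq_bot_iff]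
    rintro x ⟨⟨a, ha⟩, ⟨b, hb⟩⟩
    have h1 : e x = x := by rw [← ha]; exact happ a
    have h2 : e x = 0 := by
      rw [← hb]
      simp only [LinearMap.sub_apply, Module.End.one_apply, map_sub]
      rw [happ b]; simp
    simpa [h2] using h1.symm
  · rw [codisjoint_iff, eq_top_iff]
    intro x _
    refine Submodule.mem_sup.2 ⟨e x, ⟨x, rfl⟩, x - e x, ⟨x, ?_⟩, by abel⟩
    simp

lemma key_sup (h : IsDCSRickart R M) {e : Module.End R M} (he : IsIdempotentElem e)
    (f : Module.End R M) :
    ∃ g : Module.End R M, IsIdempotentElem g ∧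
      LiesAbove (LinearMap.range e ⊔ LinearMap.range f) (LinearMap.range g) := by
  classical
  set ψ : Module.End R M := (1 - e) * f with hψ
  have hψ_apply : ∀ x, ψ x = f x - e (f x) := by
    intro x; simp [hψ, Module.End.mul_apply]
  have hrange_eq : LinearMap.range e ⊔ LinearMap.range f
      = LinearMap.range e ⊔ LinearMap.range ψ := by
    apply le_antisymm
    · refine sup_le le_sup_left ?_
      rintro _ ⟨x, rfl⟩
      have : f x = e (f x) + ψ x := by rw [hψ_apply]; abel
      rw [this]
      exact Submodule.add_mem _ (le_sup_left (α := Submodule R M) ⟨f x, rfl⟩)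
        (le_sup_right (α := Submodule R M) ⟨x, rfl⟩)
    · refine sup_le le_sup_left ?_
      rintro _ ⟨x, rfl⟩
      rw [hψ_apply]
      exact Submodule.sub_mem _ (le_sup_right (α := Submodule R M) ⟨x, rfl⟩)
        (le_sup_left (α := Submodule R M) ⟨f x, rfl⟩)
  obtain ⟨D, K, hcDK, hDle, hsmK⟩ := h ψ
  obtain ⟨S, hSsmall, hNS⟩ := liesAbove_exists_small ⟨K, hcDK, hDle, hsmK⟩
  set P := LinearMap.range (1 - e : Module.End R M) with hP
  have hce : IsCompl (LinearMap.range e) P := isCompl_range_idem he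
  have hψP : LinearMap.range ψ ≤ P := by
    rintro _ ⟨x, rfl⟩
    exact ⟨f x, rfl⟩
  have hDP : D ≤ P := le_trans hDle hψP
  -- P = D ⊔ (K ⊓ P)
  have hPdec : P = D ⊔ (K ⊓ P) := by
    have h1 : (D ⊔ K) ⊓ P = D ⊔ K ⊓ P := sup_inf_assoc_of_le K hDP
    rw [hcDK.sup_eq_top, top_inf_eq] at h1
    exact h1
  set K' := K ⊓ P with hK'
  set G := LinearMap.range e ⊔ D with hG
  have hcG : IsCompl G K' := by
    constructor
    · rw [disjoint_iff, eq_bot_iff]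
      rintro x ⟨hxG, hxK'⟩
      obtain ⟨a, ha, d, hd, rfl⟩ := Submodule.mem_sup.1 hxG
      have hxP : a + d ∈ P := hxK'.2
      have haP : a ∈ P := by
        have : a = (a + d) - d := by abel
        rw [this]
        exact Submodule.sub_mem _ hxP (hDP hd)
      have ha0 : a = 0 := by
        have hmem : a ∈ (LinearMap.range e ⊓ P : Submodule R M) := ⟨ha, haP⟩
        rwa [hce.inf_eq_bot, Submodule.mem_bot] at hmem
      have hdK : d ∈ K := by
        have := hxK'.1
        rwa [ha0, zero_add] at this
      have hd0 : d = 0 := by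
        have hmem : d ∈ D ⊓ K := ⟨hd, hdK⟩
        rwa [hcDK.inf_eq_bot, Submodule.mem_bot] at hmem
      simp [ha0, hd0]
    · rw [codisjoint_iff, eq_top_iff]
      have : G ⊔ K' = LinearMap.range e ⊔ (D ⊔ K') := by rw [hG, sup_assoc]
      rw [this, ← hPdec, hce.sup_eq_top]
  have hGN : G ≤ LinearMap.range e ⊔ LinearMap.range f := by
    rw [hrange_eq]
    exact sup_le le_sup_left (le_trans hDle le_sup_right)
  have hNdec : LinearMap.range e ⊔ LinearMap.range f = G ⊔ S := by
    rw [hrange_eq, hNS, hG, sup_assoc]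
  refine ⟨projEnd G K' hcG, projEnd_idem hcG, ?_⟩
  rw [projEnd_range hcG]
  exact liesAbove_of_small hcG hGN hSsmall hNdec

lemma key_above (h : IsDCSRickart R M) {e f g : Module.End R M} {A B : Submodule R M}
    (hg : IsIdempotentElem g)
    (hgle : LiesAbove (LinearMap.range e ⊔ LinearMap.range f) (LinearMap.range g))
    (hA : LiesAbove A (LinearMap.range e)) (hB : LiesAbove B (LinearMap.range f)) :
    LiesAbove (A ⊔ B) (LinearMap.range g) := by
  obtain ⟨Kg, hcg, hgle', hsmg⟩ := hgle
  obtain ⟨Sg, hSg, hEFg⟩ := liesAbove_exists_small ⟨Kg, hcg, hgle', hsmg⟩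
  obtain ⟨SA, hSA, hAeq⟩ := liesAbove_exists_small hA
  obtain ⟨SB, hSB, hBeq⟩ := liesAbove_exists_small hB
  have hsum : A ⊔ B = LinearMap.range g ⊔ (Sg ⊔ (SA ⊔ SB)) := by
    rw [hAeq, hBeq]
    rw [sup_sup_sup_comm, hEFg]
    rw [sup_assoc]
  exact liesAbove_of_small hcg (by rw [hsum]; exact le_sup_left)
    (smallIn_sup hSg (smallIn_sup hSA hSB)) hsum

lemma range_above (h : IsDCSRickart R M) (φ : Module.End R M) :
    ∃ e : Module.End R M, IsIdempotentElem e ∧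
      LiesAbove (LinearMap.range φ) (LinearMap.range e) := by
  obtain ⟨D, K, hc, hDle, hsm⟩ := h φ
  refine ⟨projEnd D K hc, projEnd_idem hc, ?_⟩
  rw [projEnd_range hc]
  exact ⟨K, hc, hDle, hsm⟩

end Helpers

end CSRickartPaper

namespace CSRickartPaper

/-- Properties of d-CS-Rickart modules: sums of direct summands lie above direct
summands, finite sums of images lie above direct summands, and `M` has the
SSP-d-CS property. -/
theorem dcsRickart_sspDCS
    {R : Type*} [Ring R] {M : Type*} [AddCommGroup M] [Module R M]
    (h : IsDCSRickart R M) :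
    (∀ e f : Module.End R M, IsIdempotentElem e → IsIdempotentElem f →
      ∃ g : Module.End R M, IsIdempotentElem g ∧
        LiesAbove (LinearMap.range e ⊔ LinearMap.range f) (LinearMap.range g)) ∧
    (∀ (e f : Module.End R M) (A B : Submodule R M),
      IsIdempotentElem e → IsIdempotentElem f →
      LiesAbove A (LinearMap.range e) → LiesAbove B (LinearMap.range f) →
      ∃ g : Module.End R M, IsIdempotentElem g ∧ LiesAbove (A ⊔ B) (LinearMap.range g)) ∧
    (∀ (n : ℕ) (φ : Fin n → Module.End R M),
      ∃ e : Module.End R M, IsIdempotentElem e ∧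
        LiesAbove (⨆ i, LinearMap.range (φ i)) (LinearMap.range e)) ∧
    IsSSPdCS R M := by
  have part1 : ∀ e f : Module.End R M, IsIdempotentElem e → IsIdempotentElem f →
      ∃ g : Module.End R M, IsIdempotentElem g ∧
        LiesAbove (LinearMap.range e ⊔ LinearMap.range f) (LinearMap.range g) :=
    fun e f he _ => key_sup h he f
  have part2 : ∀ (e f : Module.End R M) (A B : Submodule R M),
      IsIdempotentElem e → IsIdempotentElem f →
      LiesAbove A (LinearMap.range e) → LiesAbove B (LinearMap.range f) →
      ∃ g : Module.End R M, IsIdempotentElem g ∧ LiesAbove (A ⊔ B) (LinearMap.range g) := by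
    intro e f A B he hf hA hB
    obtain ⟨g, hg, hgle⟩ := key_sup h he f
    exact ⟨g, hg, key_above h hg hgle hA hB⟩
  have part3 : ∀ (n : ℕ) (φ : Fin n → Module.End R M),
      ∃ e : Module.End R M, IsIdempotentElem e ∧
        LiesAbove (⨆ i, LinearMap.range (φ i)) (LinearMap.range e) := by
    intro n
    induction n with
    | zero =>
      intro φ
      refine ⟨0, by simp [IsIdempotentElem], ?_⟩
      have h0 : (⨆ i : Fin 0, LinearMap.range (φ i)) = (⊥ : Submodule R M) := by
        simp [iSup_of_empty]
      rw [h0, LinearMap.range_zero]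
      exact ⟨⊤, isCompl_bot_top, le_rfl,
        ⟨le_top, fun K _ hK => by simpa using hK⟩⟩
    | succ n ih =>
      intro φ
      obtain ⟨e0, he0, hA0⟩ := range_above h (φ 0)
      obtain ⟨e', he', hA'⟩ := ih fun i => φ i.succ
      obtain ⟨g, hg, hgle⟩ := key_sup h he0 e'
      have hab := key_above h hg hgle hA0 hA'
      have hsup : (⨆ i, LinearMap.range (φ i)) =
          LinearMap.range (φ 0) ⊔ ⨆ i : Fin n, LinearMap.range (φ i.succ) := by
        apply le_antisymm
        · exact iSup_le (Fin.cases le_sup_left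
            (fun i => le_trans (le_iSup (fun i : Fin n => LinearMap.range (φ i.succ)) i)
              le_sup_right))
        · exact sup_le (le_iSup (fun j : Fin (n+1) => LinearMap.range (φ j)) 0)
            (iSup_le fun i => le_iSup (fun j : Fin (n+1) => LinearMap.range (φ j)) i.succ)
      exact ⟨g, hg, hsup ▸ hab⟩
  refine ⟨part1, part2, part3, ?_⟩
  intro A B hA hB
  obtain ⟨A', hcA⟩ := hA
  obtain ⟨B', hcB⟩ := hB
  obtain ⟨g, hg, hgle⟩ := key_sup h (projEnd_idem hcA) (projEnd B B' hcB)
  rw [projEnd_range hcA, projEnd_range hcB] at hgle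
  exact ⟨LinearMap.range g, hgle⟩


end CSRickartPaper
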